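/- (Frobenius-norm projection onto the PSD cone is the positive spectral part.) Let V be a real symmetric n × n matrix, and let V = Σ_{i=1}^n λ_i v_i v_iᵀ be a spectral decomposition of V, where λ_1, …, λ_n are the eigenvalues of V and v_1, …, v_n form an orthonormal basis of eigenvectors. Define V₊ = Σ_{i=1}^n max(λ_i, 0) v_i v_iᵀ. Then V₊ is positive semidefinite, and it is the unique minimizer of the function X ↦ ‖X − V‖_F over all real symmetric positive semidefinite n × n matrices X; that is, ‖V₊ − V‖_F < ‖X − V‖_F for every real symmetric positive semidefinite X ≠ V₊. -/

import Mathlib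

open Matrix

private lemma aux_sq_le (t l : ℝ) (ht : 0 ≤ t) : (max l 0 - l)^2 ≤ (t - l)^2 := by
  rcases le_total l 0 with h | h
  · rw [max_eq_right h]; nlinarith
  · rw [max_eq_left h]; nlinarith

private lemma aux_sq_lt (t l : ℝ) (ht : 0 ≤ t) (hne : t ≠ max l 0) :
    (max l 0 - l)^2 < (t - l)^2 := by
  rcases le_total l 0 with h | h
  · rw [max_eq_right h] at *
    have : 0 < t := lt_of_le_of_ne ht (Ne.symm hne)
    nlinarith
  · rw [max_eq_left h] at *
    have h3 : t - l ≠ 0 := sub_ne_zero.mpr hne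
    rcases h3.lt_or_gt with h2 | h2 <;> nlinarith

/-- **Frobenius-norm projection onto the PSD cone is the positive
spectral part.**  If `V = Σ_i λ_i v_i v_iᵀ` is a spectral decomposition of the
real symmetric matrix `V` (with orthonormal eigenbasis `v_i`), then
`V₊ = Σ_i max(λ_i, 0) v_i v_iᵀ` is positive semidefinite and is the unique
minimizer of `X ↦ ‖X − V‖_F` over symmetric PSD matrices, where
`‖A‖_F = √tr(Aᵀ A)`. -/
theorem psd_projection_positive_spectral_part {n : ℕ}
    (V : Matrix (Fin n) (Fin n) ℝ) (hV : V.IsSymm)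
    (lam : Fin n → ℝ) (v : Fin n → (Fin n → ℝ))
    (horth : ∀ i j, v i ⬝ᵥ v j = if i = j then (1 : ℝ) else 0)
    (hdecomp : V = ∑ i, lam i • Matrix.vecMulVec (v i) (v i))
    (Vplus : Matrix (Fin n) (Fin n) ℝ)
    (hVplus : Vplus = ∑ i, max (lam i) 0 • Matrix.vecMulVec (v i) (v i)) :
    Vplus.PosSemidef ∧
      ∀ X : Matrix (Fin n) (Fin n) ℝ, X.PosSemidef → X ≠ Vplus →
        Real.sqrt (Matrix.trace ((Vplus - V)ᵀ * (Vplus - V))) <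
          Real.sqrt (Matrix.trace ((X - V)ᵀ * (X - V))) := by
  classical
  set U : Matrix (Fin n) (Fin n) ℝ := Matrix.of (fun i j => v j i) with hU
  have hUH : Uᴴ = Uᵀ := by ext i j; simp [conjTranspose_apply]
  have hUtH : (Uᵀ)ᴴ = U := by ext i j; simp [conjTranspose_apply]
  have hUtU : Uᵀ * U = 1 := by
    ext i j
    have := horth i j
    simpa [hU, Matrix.mul_apply, dotProduct, Matrix.one_apply] using this
  have hUUt : U * Uᵀ = 1 := mul_eq_one_comm.mp hUtU
  have key : ∀ c : Fin n → ℝ,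
      Uᵀ * (∑ i, c i • Matrix.vecMulVec (v i) (v i)) * U = Matrix.diagonal c := by
    intro c
    ext p q
    simp only [Matrix.mul_apply, Matrix.transpose_apply, Matrix.sum_apply, Matrix.smul_apply,
      Matrix.vecMulVec_apply, smul_eq_mul, Matrix.diagonal_apply, hU, Matrix.of_apply]
    simp_rw [Finset.sum_mul]
    have step : ∀ x k : Fin n, (v p k * ∑ i, c i * (v i k * v i x)) * v q x
        = ∑ i, c i * ((v p k * v i k) * (v i x * v q x)) := by
      intro x k
      rw [Finset.mul_sum, Finset.sum_mul]
      exact Finset.sum_congr rfl fun i _ => by ring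
    simp_rw [step]
    rw [Finset.sum_comm]
    have step2 : ∀ k : Fin n, ∑ x, ∑ i, c i * ((v p k * v i k) * (v i x * v q x))
        = ∑ i, c i * ((v p k * v i k) * (v i ⬝ᵥ v q)) := by
      intro k
      rw [Finset.sum_comm]
      refine Finset.sum_congr rfl fun i _ => ?_
      simp [dotProduct, Finset.mul_sum]
    simp_rw [step2]
    rw [Finset.sum_comm]
    have step3 : ∀ i : Fin n, ∑ k, c i * ((v p k * v i k) * (v i ⬝ᵥ v q))
        = c i * ((v p ⬝ᵥ v i) * (v i ⬝ᵥ v q)) := by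
      intro i
      rw [← Finset.mul_sum, ← Finset.sum_mul]
      simp [dotProduct]
    simp_rw [step3, horth]
    by_cases h : p = q <;> simp [h]
  have recon : ∀ A : Matrix (Fin n) (Fin n) ℝ, U * (Uᵀ * A * U) * Uᵀ = A := by
    intro A
    simp only [← Matrix.mul_assoc]
    rw [hUUt, Matrix.one_mul, Matrix.mul_assoc, hUUt, Matrix.mul_one]
  have htr : ∀ A : Matrix (Fin n) (Fin n) ℝ,
      Matrix.trace ((Uᵀ * A * U)ᵀ * (Uᵀ * A * U)) = Matrix.trace (Aᵀ * A) := by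
    intro A
    have h1 : (Uᵀ * A * U)ᵀ = Uᵀ * Aᵀ * U := by
      simp [Matrix.transpose_mul, Matrix.mul_assoc]
    have h2 : (Uᵀ * Aᵀ * U) * (Uᵀ * A * U) = Uᵀ * (Aᵀ * A) * U := by
      simp only [← Matrix.mul_assoc]
      rw [Matrix.mul_assoc (Uᵀ * Aᵀ) U Uᵀ, hUUt, Matrix.mul_one]
    rw [h1, h2, Matrix.trace_mul_cycle, ← Matrix.mul_assoc, hUUt, Matrix.one_mul]
  have hVplusEq : Vplus = U * Matrix.diagonal (fun i => max (lam i) 0) * Uᵀ := by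
    have h := key (fun i => max (lam i) 0)
    rw [← hVplus] at h
    calc Vplus = U * (Uᵀ * Vplus * U) * Uᵀ := (recon Vplus).symm
      _ = _ := by rw [h]
  have hPSD : Vplus.PosSemidef := by
    rw [hVplusEq, ← hUH]
    exact (Matrix.PosSemidef.diagonal (fun i => le_max_right _ _)).mul_mul_conjTranspose_same U
  refine ⟨hPSD, fun X hX hne => ?_⟩
  set Y := Uᵀ * X * U with hY
  have hYpsd : Y.PosSemidef := by
    have h := hX.mul_mul_conjTranspose_same Uᵀ
    rwa [hUtH] at h
  have hdiagY : ∀ p, 0 ≤ Y p p := fun p => hYpsd.diag_nonneg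
  have hXV : Uᵀ * (X - V) * U = Y - Matrix.diagonal lam := by
    rw [Matrix.mul_sub, Matrix.sub_mul]
    congr 1
    rw [hdecomp]
    exact key lam
  have hVpV : Uᵀ * (Vplus - V) * U = Matrix.diagonal (fun i => max (lam i) 0 - lam i) := by
    have h : Vplus - V = ∑ i, (max (lam i) 0 - lam i) • Matrix.vecMulVec (v i) (v i) := by
      rw [hVplus, hdecomp, ← Finset.sum_sub_distrib]
      exact Finset.sum_congr rfl fun i _ => (sub_smul _ _ _).symm
    rw [h, key]
  have traceForm : ∀ A : Matrix (Fin n) (Fin n) ℝ,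
      Matrix.trace (Aᵀ * A) = ∑ z : Fin n × Fin n, (A z.1 z.2)^2 := by
    intro A
    rw [Fintype.sum_prod_type]
    simp only [Matrix.trace, Matrix.diag_apply, Matrix.mul_apply, Matrix.transpose_apply, ← sq]
    exact Finset.sum_comm
  have hgoal_b : Matrix.trace ((X - V)ᵀ * (X - V))
      = ∑ z : Fin n × Fin n, ((Y - Matrix.diagonal lam) z.1 z.2)^2 := by
    rw [← htr (X - V), hXV, traceForm]
  have hgoal_a : Matrix.trace ((Vplus - V)ᵀ * (Vplus - V))
      = ∑ i, (max (lam i) 0 - lam i)^2 := by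
    rw [← htr (Vplus - V), hVpV, traceForm, Fintype.sum_prod_type]
    have h : ∀ a b : Fin n,
        ((Matrix.diagonal (fun i => max (lam i) 0 - lam i)) a b)^2
          = if a = b then (max (lam a) 0 - lam a)^2 else 0 := by
      intro a b
      by_cases hab : a = b <;> simp [Matrix.diagonal_apply, hab]
    simp_rw [h]
    simp
  have hYne : Y ≠ Matrix.diagonal (fun i => max (lam i) 0) := by
    intro h
    apply hne
    calc X = U * Y * Uᵀ := (recon X).symm
      _ = Vplus := by rw [h, ← hVplusEq]
  have hex : ∃ z : Fin n × Fin n,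
      Y z.1 z.2 ≠ Matrix.diagonal (fun i => max (lam i) 0) z.1 z.2 := by
    by_contra h
    push_neg at h
    exact hYne (Matrix.ext fun i j => h (i, j))
  obtain ⟨⟨p, q⟩, hpq⟩ := hex
  have hsum : ∑ i, (max (lam i) 0 - lam i)^2
      < ∑ z : Fin n × Fin n, ((Y - Matrix.diagonal lam) z.1 z.2)^2 := by
    have ha : ∑ i, (max (lam i) 0 - lam i)^2
        = ∑ z : Fin n × Fin n,
            (if z.1 = z.2 then (max (lam z.1) 0 - lam z.1)^2 else 0) := by
      rw [Fintype.sum_prod_type]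
      simp
    rw [ha]
    apply Finset.sum_lt_sum
    · rintro ⟨a, b⟩ _
      by_cases h : a = b
      · subst h
        simp only [if_pos rfl, Matrix.sub_apply, Matrix.diagonal_apply_eq]
        exact aux_sq_le _ _ (hdiagY a)
      · simp only [if_neg h]
        positivity
    · refine ⟨(p, q), Finset.mem_univ _, ?_⟩
      by_cases h : p = q
      · subst h
        simp only [if_pos rfl, Matrix.sub_apply, Matrix.diagonal_apply_eq]
        refine aux_sq_lt _ _ (hdiagY p) ?_
        simpa [Matrix.diagonal_apply_eq] using hpq
      · simp only [if_neg h]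
        have h0 : Y p q ≠ 0 := by simpa [Matrix.diagonal_apply_ne _ h] using hpq
        have heq : (Y - Matrix.diagonal lam) p q = Y p q := by
          simp [Matrix.diagonal_apply_ne _ h]
        rw [heq]
        exact lt_of_le_of_ne (sq_nonneg _) (Ne.symm (pow_ne_zero _ h0))
  rw [hgoal_a, hgoal_b]
  exact Real.sqrt_lt_sqrt (by positivity) hsum
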